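/- Hankel-norm bound by largest singular value (discrete time): let 𝒫, 𝒬 be symmetric positive definite n×n matrices with A_q𝒫A_qᵀ + B_qB_qᵀ − 𝒫 ≤ 0 and A_qᵀ𝒬A_q + C_qᵀC_q − 𝒬 ≤ 0 for all q in a finite set Q. Then for every input u supported on {0,…,t−1} with Σ_s ‖u(s)‖² ≤ 1, every switching sequence q, and the trajectory x(s+1) = A_{q(s)}x(s) + B_{q(s)}u(s), x(0)=0, y(s) = C_{q(s)}x(s), one has Σ_{s=t}^{T} ‖y(s)‖₂² ≤ λ_max(𝒫𝒬) for all T ≥ t. -/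

import Mathlib

open Matrix

section Helpers

variable {k l : Type*} [Fintype k] [Fintype l]

private lemma dp_t (M : Matrix k l ℝ) (w : k → ℝ) (v : l → ℝ) :
    (Mᵀ *ᵥ w) ⬝ᵥ v = w ⬝ᵥ (M *ᵥ v) := by
  rw [Matrix.mulVec_transpose, ← Matrix.dotProduct_mulVec]

private lemma conjT_real (M : Matrix k l ℝ) : Mᴴ = Mᵀ := by
  ext i j; simp [Matrix.conjTranspose_apply]

private lemma dp_self_nonneg (v : k → ℝ) : 0 ≤ v ⬝ᵥ v :=
  Finset.sum_nonneg fun i _ => mul_self_nonneg _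

private lemma pos_dp {n : Type*} [Fintype n] {M : Matrix n n ℝ} (hM : M.PosSemidef)
    (v : n → ℝ) : 0 ≤ v ⬝ᵥ (M *ᵥ v) := by
  simpa using hM.dotProduct_mulVec_nonneg v

end Helpers

private lemma con_step {n m : ℕ} (P : Matrix (Fin n) (Fin n) ℝ) (hP : P.PosDef)
    (A : Matrix (Fin n) (Fin n) ℝ) (B : Matrix (Fin n) (Fin m) ℝ)
    (hq : ∀ v, v ⬝ᵥ ((A * P * Aᵀ + B * Bᵀ - P) *ᵥ v) ≤ 0)
    (x : Fin n → ℝ) (u : Fin m → ℝ) :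
    (A *ᵥ x + B *ᵥ u) ⬝ᵥ (P⁻¹ *ᵥ (A *ᵥ x + B *ᵥ u)) ≤ x ⬝ᵥ (P⁻¹ *ᵥ x) + u ⬝ᵥ u := by
  have hdet : IsUnit P.det := hP.det_pos.ne'.isUnit
  have hPP : P * P⁻¹ = 1 := Matrix.mul_nonsing_inv _ hdet
  have hPsym : Pᵀ = P := by rw [← conjT_real]; exact hP.isHermitian
  have hP'P : P⁻¹ * P = 1 := Matrix.nonsing_inv_mul _ hdet
  have hPisym : P⁻¹ᵀ = P⁻¹ := by rw [Matrix.transpose_nonsing_inv, hPsym]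
  set z := A *ᵥ x + B *ᵥ u with hz
  set w := P⁻¹ *ᵥ z with hw
  have hPw : P *ᵥ w = z := by rw [hw, Matrix.mulVec_mulVec, hPP, Matrix.one_mulVec]
  have hPPx : P *ᵥ (P⁻¹ *ᵥ x) = x := by
    rw [Matrix.mulVec_mulVec, hPP, Matrix.one_mulVec]
  -- square 1
  have key1 : 0 ≤ (Aᵀ *ᵥ w - P⁻¹ *ᵥ x) ⬝ᵥ (P *ᵥ (Aᵀ *ᵥ w - P⁻¹ *ᵥ x)) :=
    pos_dp hP.posSemidef _
  have key2 : 0 ≤ (Bᵀ *ᵥ w - u) ⬝ᵥ (Bᵀ *ᵥ w - u) := dp_self_nonneg _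
  have eq1 : (Aᵀ *ᵥ w - P⁻¹ *ᵥ x) ⬝ᵥ (P *ᵥ (Aᵀ *ᵥ w - P⁻¹ *ᵥ x))
      = w ⬝ᵥ ((A * P * Aᵀ) *ᵥ w) - 2 * (w ⬝ᵥ (A *ᵥ x)) + x ⬝ᵥ (P⁻¹ *ᵥ x) := by
    have e1 : (Aᵀ *ᵥ w) ⬝ᵥ (P *ᵥ (Aᵀ *ᵥ w)) = w ⬝ᵥ ((A * P * Aᵀ) *ᵥ w) := by
      rw [dp_t, Matrix.mulVec_mulVec, Matrix.mulVec_mulVec, Matrix.mul_assoc]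
    have e2 : (Aᵀ *ᵥ w) ⬝ᵥ (P *ᵥ (P⁻¹ *ᵥ x)) = w ⬝ᵥ (A *ᵥ x) := by
      rw [hPPx, dp_t]
    have e3 : (P⁻¹ *ᵥ x) ⬝ᵥ (P *ᵥ (Aᵀ *ᵥ w)) = w ⬝ᵥ (A *ᵥ x) := by
      rw [← hPisym, dp_t, Matrix.mulVec_mulVec, hP'P, Matrix.one_mulVec, dotProduct_comm,
        dp_t]
    have e4 : (P⁻¹ *ᵥ x) ⬝ᵥ (P *ᵥ (P⁻¹ *ᵥ x)) = x ⬝ᵥ (P⁻¹ *ᵥ x) := by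
      rw [hPPx, dotProduct_comm]
    rw [Matrix.mulVec_sub, dotProduct_sub, sub_dotProduct, sub_dotProduct, e1, e2, e3, e4]
    ring
  have eq2 : (Bᵀ *ᵥ w - u) ⬝ᵥ (Bᵀ *ᵥ w - u)
      = w ⬝ᵥ ((B * Bᵀ) *ᵥ w) - 2 * (w ⬝ᵥ (B *ᵥ u)) + u ⬝ᵥ u := by
    have e1 : (Bᵀ *ᵥ w) ⬝ᵥ (Bᵀ *ᵥ w) = w ⬝ᵥ ((B * Bᵀ) *ᵥ w) := by
      rw [dp_t, Matrix.mulVec_mulVec]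
    have e2 : (Bᵀ *ᵥ w) ⬝ᵥ u = w ⬝ᵥ (B *ᵥ u) := dp_t _ _ _
    have e3 : u ⬝ᵥ (Bᵀ *ᵥ w) = w ⬝ᵥ (B *ᵥ u) := by rw [dotProduct_comm, e2]
    rw [dotProduct_sub, sub_dotProduct, sub_dotProduct, e1, e2, e3]
    ring
  have hqw := hq w
  rw [Matrix.sub_mulVec, Matrix.add_mulVec, dotProduct_sub, dotProduct_add] at hqw
  have hwPw : w ⬝ᵥ (P *ᵥ w) = w ⬝ᵥ (A *ᵥ x) + w ⬝ᵥ (B *ᵥ u) := by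
    rw [hPw, hz, dotProduct_add]
  have hgoal : z ⬝ᵥ w = w ⬝ᵥ (A *ᵥ x) + w ⬝ᵥ (B *ᵥ u) := by
    rw [dotProduct_comm z w, ← dotProduct_add, ← hz]
  rw [eq1] at key1
  rw [eq2] at key2
  rw [hgoal]
  linarith


private lemma quad_le {n : ℕ} (M : Matrix (Fin n) (Fin n) ℝ) (hM : M.IsHermitian) (lam : ℝ)
    (h : ∀ i, hM.eigenvalues i ≤ lam) (z : Fin n → ℝ) :
    z ⬝ᵥ (M *ᵥ z) ≤ lam * (z ⬝ᵥ z) := by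
  set U : Matrix (Fin n) (Fin n) ℝ := (hM.eigenvectorUnitary : Matrix (Fin n) (Fin n) ℝ) with hUdef
  have hUstar : star U = Uᵀ := conjT_real U
  have hUU : U * Uᵀ = 1 := by
    rw [← hUstar]
    exact (Matrix.mem_unitaryGroup_iff).mp hM.eigenvectorUnitary.2
  have hdiag : M = U * Matrix.diagonal hM.eigenvalues * Uᵀ := by
    rw [← hUstar]
    convert hM.spectral_theorem using 3
    rw [Unitary.conjStarAlgAut_apply]
    simp [hUdef]
  have h1 : z ⬝ᵥ (M *ᵥ z) = (Uᵀ *ᵥ z) ⬝ᵥ (Matrix.diagonal hM.eigenvalues *ᵥ (Uᵀ *ᵥ z)) := by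
    conv_lhs => rw [hdiag]
    rw [← Matrix.mulVec_mulVec, ← Matrix.mulVec_mulVec, ← dp_t]
  have h2 : (Uᵀ *ᵥ z) ⬝ᵥ (Uᵀ *ᵥ z) = z ⬝ᵥ z := by
    rw [dp_t, Matrix.mulVec_mulVec, hUU, Matrix.one_mulVec]
  rw [h1, ← h2]
  unfold dotProduct
  rw [Finset.mul_sum]
  apply Finset.sum_le_sum
  intro i _
  rw [Matrix.mulVec_diagonal]
  nlinarith [h i, mul_self_nonneg ((Uᵀ *ᵥ z) i)]

private lemma spectral_bound {n : ℕ} (Pg Qg : Matrix (Fin n) (Fin n) ℝ)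
    (hPg : Pg.PosDef) (hQg : Qg.PosDef) (lam : ℝ)
    (hlam : IsGreatest (spectrum ℝ (Pg * Qg)) lam) :
    0 ≤ lam ∧ ∀ v : Fin n → ℝ, v ⬝ᵥ (Qg *ᵥ v) ≤ lam * (v ⬝ᵥ (Pg⁻¹ *ᵥ v)) := by
  rcases Nat.eq_zero_or_pos n with hn | hn
  · subst hn
    exact absurd (isUnit_of_subsingleton _) (spectrum.mem_iff.mp hlam.1)
  set S : Matrix (Fin n) (Fin n) ℝ := (open scoped MatrixOrder in CFC.sqrt Pg) with hSdef
  have hSS : S * S = Pg := by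
    open scoped MatrixOrder in exact CFC.sqrt_mul_sqrt_self Pg hPg.posSemidef.nonneg
  have hSherm : S.IsHermitian := by
    open scoped MatrixOrder in exact (CFC.sqrt_nonneg Pg).posSemidef.1
  have hSsym : Sᵀ = S := by rw [← conjT_real]; exact hSherm
  have hSdet : IsUnit S.det := by
    have hd : S.det * S.det = Pg.det := by rw [← Matrix.det_mul, hSS]
    have h0 : S.det ≠ 0 := fun h => by
      rw [h, mul_zero] at hd; exact hPg.det_pos.ne hd
    exact h0.isUnit
  have hSS' : S * S⁻¹ = 1 := Matrix.mul_nonsing_inv _ hSdet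
  have hS'S : S⁻¹ * S = 1 := Matrix.nonsing_inv_mul _ hSdet
  set M : Matrix (Fin n) (Fin n) ℝ := S * Qg * S with hMdef
  have hMpsd : M.PosSemidef := by
    have hh := hQg.posSemidef.mul_mul_conjTranspose_same S
    rwa [hSherm.eq] at hh
  have hkey : spectrum ℝ ((⟨S, S⁻¹, hSS', hS'S⟩ : (Matrix (Fin n) (Fin n) ℝ)ˣ) * M *
      (⟨S, S⁻¹, hSS', hS'S⟩ : (Matrix (Fin n) (Fin n) ℝ)ˣ)⁻¹ : Matrix (Fin n) (Fin n) ℝ)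
      = spectrum ℝ M := spectrum.units_conjugate
  have hPQ : S * M * S⁻¹ = Pg * Qg := by
    rw [hMdef, ← Matrix.mul_assoc, ← Matrix.mul_assoc,
      Matrix.mul_assoc (S * S * Qg) S S⁻¹, hSS', Matrix.mul_one, hSS]
  have hspec : spectrum ℝ M = spectrum ℝ (Pg * Qg) := by
    rw [← hPQ]
    exact hkey.symm
  have heig : ∀ i, hMpsd.1.eigenvalues i ≤ lam := fun i =>
    hlam.2 (hspec ▸ hMpsd.1.eigenvalues_mem_spectrum_real i)
  have hlam0 : 0 ≤ lam :=
    le_trans (hMpsd.eigenvalues_nonneg ⟨0, hn⟩) (heig ⟨0, hn⟩)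
  refine ⟨hlam0, fun v => ?_⟩
  have hSc : S *ᵥ (S⁻¹ *ᵥ v) = v := by rw [Matrix.mulVec_mulVec, hSS', Matrix.one_mulVec]
  have h1 : v ⬝ᵥ (Qg *ᵥ v) = (S⁻¹ *ᵥ v) ⬝ᵥ (M *ᵥ (S⁻¹ *ᵥ v)) := by
    conv_lhs => rw [← hSc]
    rw [hMdef, ← Matrix.mulVec_mulVec, ← Matrix.mulVec_mulVec]
    nth_rewrite 1 [← hSsym]
    rw [dp_t]
  have h2 : v ⬝ᵥ (Pg⁻¹ *ᵥ v) = (S⁻¹ *ᵥ v) ⬝ᵥ (S⁻¹ *ᵥ v) := by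
    have hPinv : Pg⁻¹ = S⁻¹ * S⁻¹ := by rw [← hSS, Matrix.mul_inv_rev]
    have hSisym : S⁻¹ᵀ = S⁻¹ := by rw [Matrix.transpose_nonsing_inv, hSsym]
    rw [hPinv, ← Matrix.mulVec_mulVec]
    nth_rewrite 3 [← hSisym]
    rw [dp_t]
  rw [h1, h2]
  exact quad_le M hMpsd.1 lam heig _


/-- Hankel-norm bound by largest singular value, discrete time:
if `Pg, Qg ≻ 0` satisfy the controllability and observability grammian
inequalities, then for any input supported on `{0,…,t−1}` with energy at most
`1`, the output of the zero-initial-state trajectory satisfies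
`Σ_{s=t}^{T} ‖y(s)‖² ≤ λ_max(Pg·Qg)` for all `T ≥ t`. -/
theorem stmt18 {n m p : ℕ} {Q : Type*} [Fintype Q]
    (A : Q → Matrix (Fin n) (Fin n) ℝ)
    (B : Q → Matrix (Fin n) (Fin m) ℝ)
    (C : Q → Matrix (Fin p) (Fin n) ℝ)
    (Pg Qg : Matrix (Fin n) (Fin n) ℝ) (hPg : Pg.PosDef) (hQg : Qg.PosDef)
    (hcon : ∀ q : Q, ∀ v : Fin n → ℝ,
      v ⬝ᵥ ((A q * Pg * (A q)ᵀ + B q * (B q)ᵀ - Pg) *ᵥ v) ≤ 0)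
    (hobs : ∀ q : Q, ∀ v : Fin n → ℝ,
      v ⬝ᵥ (((A q)ᵀ * Qg * A q + (C q)ᵀ * C q - Qg) *ᵥ v) ≤ 0)
    (t : ℕ) (u : ℕ → Fin m → ℝ)
    (hsupp : ∀ s : ℕ, t ≤ s → u s = 0)
    (henergy : ∑ s ∈ Finset.range t, ∑ i, (u s i) ^ 2 ≤ 1)
    (q : ℕ → Q) (x : ℕ → Fin n → ℝ) (y : ℕ → Fin p → ℝ)
    (hx0 : x 0 = 0)
    (hx : ∀ s : ℕ, x (s + 1) = (A (q s)) *ᵥ (x s) + (B (q s)) *ᵥ (u s))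
    (hy : ∀ s : ℕ, y s = (C (q s)) *ᵥ (x s))
    (lam : ℝ) (hlam : IsGreatest (spectrum ℝ (Pg * Qg)) lam)
    (T : ℕ) (hT : t ≤ T) :
    ∑ s ∈ Finset.Icc t T, ∑ i, (y s i) ^ 2 ≤ lam := by
  obtain ⟨hlam0, hbound⟩ := spectral_bound Pg Qg hPg hQg lam hlam
  have hxP : ∀ s : ℕ, x s ⬝ᵥ (Pg⁻¹ *ᵥ x s) ≤ ∑ r ∈ Finset.range s, u r ⬝ᵥ u r := by
    intro s
    induction s with
    | zero => simp [hx0]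
    | succ s ih =>
      rw [Finset.sum_range_succ]
      have hc : x (s+1) ⬝ᵥ (Pg⁻¹ *ᵥ x (s+1)) ≤ x s ⬝ᵥ (Pg⁻¹ *ᵥ x s) + u s ⬝ᵥ u s := by
        rw [hx s]
        exact con_step Pg hPg (A (q s)) (B (q s)) (hcon (q s)) (x s) (u s)
      linarith
  have hxt : x t ⬝ᵥ (Pg⁻¹ *ᵥ x t) ≤ 1 := by
    refine le_trans (hxP t) (le_trans (le_of_eq ?_) henergy)
    refine Finset.sum_congr rfl fun s _ => ?_
    simp [dotProduct, pow_two]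
  have hstep : ∀ s, t ≤ s →
      (∑ i, (y s i)^2) + x (s+1) ⬝ᵥ (Qg *ᵥ x (s+1)) ≤ x s ⬝ᵥ (Qg *ᵥ x s) := by
    intro s hs
    have hx1 : x (s+1) = A (q s) *ᵥ x s := by
      rw [hx s, hsupp s hs, Matrix.mulVec_zero, add_zero]
    have ho := hobs (q s) (x s)
    rw [Matrix.sub_mulVec, Matrix.add_mulVec, dotProduct_sub, dotProduct_add] at ho
    have e1 : x (s+1) ⬝ᵥ (Qg *ᵥ x (s+1)) = x s ⬝ᵥ (((A (q s))ᵀ * Qg * A (q s)) *ᵥ x s) := by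
      rw [hx1, ← Matrix.mulVec_mulVec, ← Matrix.mulVec_mulVec]
      conv_rhs => rw [dotProduct_comm]
      rw [dp_t, dotProduct_comm]
    have e2 : (∑ i, (y s i)^2) = x s ⬝ᵥ (((C (q s))ᵀ * C (q s)) *ᵥ x s) := by
      have e3 : x s ⬝ᵥ (((C (q s))ᵀ * C (q s)) *ᵥ x s)
          = (C (q s) *ᵥ x s) ⬝ᵥ (C (q s) *ᵥ x s) := by
        rw [← Matrix.mulVec_mulVec, dotProduct_comm, dp_t]
      rw [e3, ← hy s]
      simp [dotProduct, pow_two]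
    linarith
  have hsum : ∀ T', t ≤ T' →
      (∑ s ∈ Finset.Icc t T', ∑ i, (y s i)^2) + x (T'+1) ⬝ᵥ (Qg *ᵥ x (T'+1))
        ≤ x t ⬝ᵥ (Qg *ᵥ x t) := by
    intro T' hT'
    induction T', hT' using Nat.le_induction with
    | base =>
      rw [Finset.Icc_self, Finset.sum_singleton]
      exact hstep t le_rfl
    | succ T' hT' ih =>
      rw [Finset.sum_Icc_succ_top (by omega : t ≤ T'+1)]
      have h2 := hstep (T'+1) (by omega)
      linarith
  have hfin := hsum T hT
  have hq0 : 0 ≤ x (T+1) ⬝ᵥ (Qg *ᵥ x (T+1)) := pos_dp hQg.posSemidef _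
  have hb := hbound (x t)
  have hm : lam * (x t ⬝ᵥ (Pg⁻¹ *ᵥ x t)) ≤ lam * 1 := mul_le_mul_of_nonneg_left hxt hlam0
  rw [mul_one] at hm
  linarith
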